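/- Let (Ω, μ) be a σ-finite measure space, f : (0,∞) → ℝ convex, and φ, ψ ∈ L¹(Ω,μ) nonnegative with ∫φ dμ = ∫ψ dμ = 1 and f(1) = 0. Then S_f(φ‖ψ) ≥ 0, and if f is strictly convex then S_f(φ‖ψ) = 0 implies φ = ψ μ-almost everywhere. -/

import Mathlib

open MeasureTheory Set Filter ENNReal

/-- The extended-real-valued integral of a real function, with value in `(-∞,+∞]`
when the negative part is integrable. -/
noncomputable def eIntegral {Ω : Type*} [MeasurableSpace Ω] (μ : Measure Ω)
    (g : Ω → ℝ) : EReal :=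
  ((∫⁻ x, ENNReal.ofReal (g x) ∂μ : ℝ≥0∞) : EReal)
    - ((∫⁻ x, ENNReal.ofReal (-(g x)) ∂μ : ℝ≥0∞) : EReal)

/-- The classical `f`-divergence
`S_f(φ‖ψ) = ∫_{{φ>0}∩{ψ>0}} ψ·f(φ/ψ) dμ + f(0⁺)·∫_{{φ=0}} ψ dμ + f'(∞)·∫_{{ψ=0}} φ dμ`,
with values in `(-∞,+∞]`; here `f0` plays the role of `f(0⁺)` and `finf` of `f'(∞)`. -/
noncomputable def classicalFDiv {Ω : Type*} [MeasurableSpace Ω] (μ : Measure Ω)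
    (f : ℝ → ℝ) (f0 finf : EReal) (φ ψ : Ω → ℝ) : EReal :=
  eIntegral μ (fun x => if 0 < φ x ∧ 0 < ψ x then ψ x * f (φ x / ψ x) else 0)
    + f0 * ((∫ x in {x | φ x = 0}, ψ x ∂μ : ℝ) : EReal)
    + finf * ((∫ x in {x | ψ x = 0}, φ x ∂μ : ℝ) : EReal)

/- ### Auxiliary lemmas -/

lemma aux_ofReal_identity {a b : ℝ} (h : b ≤ a) :
    ENNReal.ofReal a + ENNReal.ofReal (-b)
      = ENNReal.ofReal (a - b) + (ENNReal.ofReal (-a) + ENNReal.ofReal b) := by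
  rcases le_total 0 b with hb | hb
  · have ha : 0 ≤ a := hb.trans h
    rw [ENNReal.ofReal_of_nonpos (by linarith : -b ≤ 0),
      ENNReal.ofReal_of_nonpos (by linarith : -a ≤ 0), add_zero, zero_add,
      ← ENNReal.ofReal_add (by linarith : (0:ℝ) ≤ a - b) hb, sub_add_cancel]
  · rcases le_total 0 a with ha | ha
    · rw [ENNReal.ofReal_of_nonpos (by linarith : -a ≤ 0),
        ENNReal.ofReal_of_nonpos hb, add_zero, add_zero,
        ← ENNReal.ofReal_add ha (by linarith : (0:ℝ) ≤ -b), ← sub_eq_add_neg]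
    · rw [ENNReal.ofReal_of_nonpos ha, ENNReal.ofReal_of_nonpos hb, zero_add, add_zero,
        ← ENNReal.ofReal_add (by linarith : (0:ℝ) ≤ a - b) (by linarith : (0:ℝ) ≤ -a)]
      congr 1; ring

lemma aux_coe_ennreal_toReal {x : ℝ≥0∞} (hx : x ≠ ⊤) :
    ((x : EReal)) = ((x.toReal : ℝ) : EReal) := by
  rw [← ENNReal.ofReal_toReal hx, EReal.coe_ennreal_ofReal,
    max_eq_left ENNReal.toReal_nonneg, ENNReal.toReal_ofReal ENNReal.toReal_nonneg]

/-- Key identity: if `h` is integrable and `h ≤ g` pointwise with `g` measurable, then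
`eIntegral μ g = ∫⁻ (g-h)⁺ + ∫ h`. -/
lemma eIntegral_eq_of_le {Ω : Type*} [MeasurableSpace Ω] (μ : Measure Ω)
    (g h : Ω → ℝ) (hg : Measurable g) (hh : Integrable h μ) (hle : ∀ x, h x ≤ g x) :
    eIntegral μ g = ((∫⁻ x, ENNReal.ofReal (g x - h x) ∂μ : ℝ≥0∞) : EReal)
      + ((∫ x, h x ∂μ : ℝ) : EReal) := by
  set P := ∫⁻ x, ENNReal.ofReal (g x) ∂μ with hP
  set N := ∫⁻ x, ENNReal.ofReal (-(g x)) ∂μ with hN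
  set Ph := ∫⁻ x, ENNReal.ofReal (h x) ∂μ with hPh
  set Nh := ∫⁻ x, ENNReal.ofReal (-(h x)) ∂μ with hNh
  set D := ∫⁻ x, ENNReal.ofReal (g x - h x) ∂μ with hD
  have hham : AEMeasurable h μ := hh.aemeasurable
  have hPhlt : Ph < ⊤ := by
    refine lt_of_le_of_lt (lintegral_mono fun x => ?_) hh.2
    rw [← ofReal_norm_eq_enorm]
    exact ENNReal.ofReal_le_ofReal (le_abs_self _)
  have hNhlt : Nh < ⊤ := by
    refine lt_of_le_of_lt (lintegral_mono fun x => ?_) hh.2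
    rw [← ofReal_norm_eq_enorm]
    exact ENNReal.ofReal_le_ofReal (neg_le_abs _)
  have hNlt : N < ⊤ := by
    refine lt_of_le_of_lt (lintegral_mono fun x => ?_) hNhlt
    exact ENNReal.ofReal_le_ofReal (by linarith [hle x])
  have hkey : P + Nh = D + (N + Ph) := by
    have e1 : P + Nh
        = ∫⁻ x, (ENNReal.ofReal (g x) + ENNReal.ofReal (-(h x))) ∂μ :=
      (lintegral_add_left' hg.ennreal_ofReal.aemeasurable _).symm
    have e2 : ∫⁻ x, (ENNReal.ofReal (-(g x)) + ENNReal.ofReal (h x)) ∂μ = N + Ph :=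
      lintegral_add_left' hg.neg.ennreal_ofReal.aemeasurable _
    have e3 : ∫⁻ x, (ENNReal.ofReal (g x - h x)
          + (ENNReal.ofReal (-(g x)) + ENNReal.ofReal (h x))) ∂μ
        = D + ∫⁻ x, (ENNReal.ofReal (-(g x)) + ENNReal.ofReal (h x)) ∂μ :=
      lintegral_add_right' _ (hg.neg.ennreal_ofReal.aemeasurable.add hham.ennreal_ofReal)
    rw [e1, lintegral_congr fun x => aux_ofReal_identity (hle x), e3, e2]
  have hint : ∫ x, h x ∂μ = Ph.toReal - Nh.toReal :=
    integral_eq_lintegral_pos_part_sub_lintegral_neg_part hh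
  have hgoal : eIntegral μ g = (P : EReal) - (N : EReal) := rfl
  rw [hgoal, hint]
  rcases eq_or_ne D ⊤ with hDtop | hDtop
  · have hPtop : P = ⊤ := by
      by_contra hPt
      exact (ENNReal.add_ne_top.mpr ⟨hPt, hNhlt.ne⟩)
        (by rw [hkey, hDtop]; simp)
    have hN' : -(N : EReal) ≠ ⊥ := by
      simp only [ne_eq, EReal.neg_eq_bot_iff, EReal.coe_ennreal_eq_top_iff]
      exact hNlt.ne
    rw [hPtop, hDtop, EReal.coe_ennreal_top, sub_eq_add_neg,
      EReal.top_add_of_ne_bot hN', EReal.top_add_coe]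
  · have hPtop : P ≠ ⊤ := by
      intro hPt
      exact (ENNReal.add_ne_top.mpr ⟨hDtop,
        ENNReal.add_ne_top.mpr ⟨hNlt.ne, hPhlt.ne⟩⟩)
        (by rw [← hkey, hPt]; simp)
    have hreal : P.toReal + Nh.toReal = D.toReal + (N.toReal + Ph.toReal) := by
      rw [← ENNReal.toReal_add hPtop hNhlt.ne, ← ENNReal.toReal_add hNlt.ne hPhlt.ne,
        ← ENNReal.toReal_add hDtop (ENNReal.add_ne_top.mpr ⟨hNlt.ne, hPhlt.ne⟩), hkey]
    rw [aux_coe_ennreal_toReal hPtop, aux_coe_ennreal_toReal hNlt.ne,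
      aux_coe_ennreal_toReal hDtop]
    norm_cast
    linarith

/-- Existence of a subgradient of a convex function at `1`, normalized by `f 1 = 0`. -/
lemma aux_exists_subgradient (f : ℝ → ℝ) (hf : ConvexOn ℝ (Set.Ioi 0) f) (hf1 : f 1 = 0) :
    ∃ c : ℝ, (∀ t : ℝ, 0 < t → c * (t - 1) ≤ f t) ∧
      (StrictConvexOn ℝ (Set.Ioi 0) f → ∀ t : ℝ, 0 < t → t ≠ 1 → c * (t - 1) < f t) := by
  set sl : ℝ → ℝ := fun t => (f t - f 1) / (t - 1) with hsl
  have h1mem : (1 : ℝ) ∈ Set.Ioi (0:ℝ) := Set.mem_Ioi.mpr one_pos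
  have hslf : ∀ t : ℝ, t ≠ 1 → sl t * (t - 1) = f t := by
    intro t htne
    simp only [hsl, hf1, sub_zero]
    exact div_mul_cancel₀ _ (sub_ne_zero.mpr htne)
  have hBdd : BddBelow (sl '' Set.Ioi 1) := by
    refine ⟨sl (1/2), fun y hy => ?_⟩
    obtain ⟨t, ht, rfl⟩ := hy
    exact hf.secant_mono h1mem (Set.mem_Ioi.mpr (by norm_num))
      (Set.mem_Ioi.mpr (lt_trans one_pos ht.out))
      (by norm_num) (ne_of_gt ht.out) (by linarith [ht.out])
  have hne : (sl '' Set.Ioi 1).Nonempty := ⟨sl 2, ⟨2, Set.mem_Ioi.mpr one_lt_two, rfl⟩⟩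
  set c := sInf (sl '' Set.Ioi 1) with hc
  have hcle : ∀ t : ℝ, 1 < t → c ≤ sl t := fun t ht =>
    csInf_le hBdd ⟨t, Set.mem_Ioi.mpr ht, rfl⟩
  have hlec : ∀ t : ℝ, 0 < t → t < 1 → sl t ≤ c := by
    intro t ht ht1
    refine le_csInf hne ?_
    rintro y ⟨s, hs, rfl⟩
    exact hf.secant_mono h1mem (Set.mem_Ioi.mpr ht)
      (Set.mem_Ioi.mpr (lt_trans one_pos hs.out))
      (ne_of_lt ht1) (ne_of_gt hs.out) (by linarith [hs.out])
  refine ⟨c, ?_, ?_⟩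
  · intro t ht
    rcases lt_trichotomy t 1 with h | h | h
    · have h1 := hlec t ht h
      have h2 := hslf t (ne_of_lt h)
      nlinarith
    · simp [h, hf1]
    · have h1 := hcle t h
      have h2 := hslf t (ne_of_gt h)
      nlinarith
  · intro hsc t ht htne
    rcases lt_trichotomy t 1 with h | h | h
    · set m := (1 + t) / 2 with hm
      have hmt : t < m := by rw [hm]; linarith
      have hm1 : m < 1 := by rw [hm]; linarith
      have hm0 : 0 < m := by rw [hm]; linarith
      have hstrict : sl t < sl m :=
        hsc.secant_strict_mono h1mem (Set.mem_Ioi.mpr ht) (Set.mem_Ioi.mpr hm0)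
          (ne_of_lt h) (ne_of_lt hm1) hmt
      have hmc : sl m ≤ c := hlec m hm0 hm1
      have h2 := hslf t (ne_of_lt h)
      nlinarith
    · exact absurd h htne
    · set m := (1 + t) / 2 with hm
      have hmt : m < t := by rw [hm]; linarith
      have hm1 : 1 < m := by rw [hm]; linarith
      have hstrict : sl m < sl t :=
        hsc.secant_strict_mono h1mem (Set.mem_Ioi.mpr (by linarith))
          (Set.mem_Ioi.mpr (by linarith))
          (ne_of_gt hm1) (ne_of_gt h) hmt
      have hmc : c ≤ sl m := hcle m hm1
      have h2 := hslf t (ne_of_gt h)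
      nlinarith

lemma aux_mul_coe_le {x : EReal} {a b : ℝ} (h : (a : EReal) ≤ x) (hb : 0 ≤ b) :
    ((a * b : ℝ) : EReal) ≤ x * (b : EReal) := by
  rcases eq_or_lt_of_le hb with rfl | hb
  · simp
  induction x with
  | bot => exact absurd h (not_le.mpr (EReal.bot_lt_coe a))
  | coe y =>
    rw [← EReal.coe_mul]
    exact EReal.coe_le_coe_iff.mpr
      (mul_le_mul_of_nonneg_right (EReal.coe_le_coe_iff.mp h) hb.le)
  | top =>
    rw [EReal.top_mul_coe_of_pos hb]
    exact le_top

/-- Strict positivity of the classical `f`-divergence: if `f` is convex with `f(1) = 0`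
and `φ, ψ` are probability densities, then `S_f(φ‖ψ) ≥ 0`, and if `f` is strictly
convex then `S_f(φ‖ψ) = 0` implies `φ = ψ` a.e. -/
theorem classicalFDiv_nonneg_and_eq_zero_iff (Ω : Type*) [MeasurableSpace Ω]
    (μ : Measure Ω) [SigmaFinite μ]
    (f : ℝ → ℝ) (hf : ConvexOn ℝ (Set.Ioi 0) f) (hf1 : f 1 = 0)
    (f0 finf : EReal) (hf0bot : f0 ≠ ⊥) (hfinfbot : finf ≠ ⊥)
    (hf0 : Tendsto (fun t : ℝ => (f t : EReal)) (nhdsWithin 0 (Set.Ioi 0)) (nhds f0))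
    (hfinf : Tendsto (fun t : ℝ => ((f t / t : ℝ) : EReal)) atTop (nhds finf))
    (φ ψ : Ω → ℝ) (hφm : Measurable φ) (hψm : Measurable ψ)
    (hφ0 : ∀ x, 0 ≤ φ x) (hψ0 : ∀ x, 0 ≤ ψ x)
    (hφi : Integrable φ μ) (hψi : Integrable ψ μ)
    (hφ1 : ∫ x, φ x ∂μ = 1) (hψ1 : ∫ x, ψ x ∂μ = 1) :
    0 ≤ classicalFDiv μ f f0 finf φ ψ ∧
    (StrictConvexOn ℝ (Set.Ioi 0) f → classicalFDiv μ f f0 finf φ ψ = 0 →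
      φ =ᵐ[μ] ψ) := by
  obtain ⟨c, hc, hcs⟩ := aux_exists_subgradient f hf hf1
  have hS : MeasurableSet {x : Ω | 0 < φ x ∧ 0 < ψ x} :=
    (hφm measurableSet_Ioi).inter (hψm measurableSet_Ioi)
  have hZφm : MeasurableSet {x : Ω | φ x = 0} := hφm (measurableSet_singleton 0)
  have hZψm : MeasurableSet {x : Ω | ψ x = 0} := hψm (measurableSet_singleton 0)
  set S : Set Ω := {x : Ω | 0 < φ x ∧ 0 < ψ x} with hSdef
  set G : Ω → ℝ := fun x => if 0 < φ x ∧ 0 < ψ x then ψ x * f (φ x / ψ x) else 0 with hGdef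
  set H : Ω → ℝ := fun x => if 0 < φ x ∧ 0 < ψ x then c * (φ x - ψ x) else 0 with hHdef
  have hHind : H = S.indicator (fun x => c * (φ x - ψ x)) := by
    funext x
    by_cases hx : 0 < φ x ∧ 0 < ψ x
    · simp [hHdef, hSdef, Set.indicator_apply, hx]
    · simp [hHdef, hSdef, Set.indicator_apply, hx]
  have hHm : Measurable H := by
    rw [hHind]; exact (((hφm.sub hψm).const_mul c)).indicator hS
  have hHi : Integrable H μ := by
    rw [hHind]; exact (((hφi.sub hψi).const_mul c)).indicator hS
  have hHG : ∀ x, H x ≤ G x := by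
    intro x
    simp only [hGdef, hHdef]
    by_cases hx : 0 < φ x ∧ 0 < ψ x
    · rw [if_pos hx, if_pos hx]
      obtain ⟨hφx, hψx⟩ := hx
      have ht : (0:ℝ) < φ x / ψ x := div_pos hφx hψx
      have h1 : c * (φ x / ψ x - 1) ≤ f (φ x / ψ x) := hc _ ht
      have h2 : ψ x * (c * (φ x / ψ x - 1)) ≤ ψ x * f (φ x / ψ x) :=
        mul_le_mul_of_nonneg_left h1 hψx.le
      have h3 : ψ x * (c * (φ x / ψ x - 1)) = c * (φ x - ψ x) := by
        field_simp
      linarith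
    · rw [if_neg hx, if_neg hx]
  have hGm : Measurable G := by
    set q : Ω → ℝ := fun x => if 0 < φ x ∧ 0 < ψ x then φ x / ψ x else 1 with hqdef
    have hqm : Measurable q := Measurable.ite hS (hφm.div hψm) measurable_const
    have hqpos : ∀ x, q x ∈ Set.Ioi (0:ℝ) := by
      intro x
      simp only [hqdef]
      split_ifs with hx
      · exact div_pos hx.1 hx.2
      · exact Set.mem_Ioi.mpr one_pos
    have hfrm : Measurable fun x => f (q x) := by
      have hcont : Continuous ((Set.Ioi (0:ℝ)).restrict f) :=
        continuousOn_iff_continuous_restrict.mp (hf.continuousOn isOpen_Ioi)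
      exact hcont.measurable.comp (hqm.subtype_mk (h := hqpos))
    have hGr : G = fun x => if 0 < φ x ∧ 0 < ψ x then ψ x * f (q x) else 0 := by
      funext x
      simp only [hGdef, hqdef]
      by_cases hx : 0 < φ x ∧ 0 < ψ x
      · rw [if_pos hx, if_pos hx, if_pos hx]
      · rw [if_neg hx, if_neg hx]
    rw [hGr]
    exact Measurable.ite hS (hψm.mul hfrm) measurable_const
  set A := ∫ x in {x : Ω | φ x = 0}, ψ x ∂μ with hAdef
  set B := ∫ x in {x : Ω | ψ x = 0}, φ x ∂μ with hBdef
  have hA0 : 0 ≤ A := by rw [hAdef]; exact setIntegral_nonneg hZφm fun x _ => hψ0 x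
  have hB0 : 0 ≤ B := by rw [hBdef]; exact setIntegral_nonneg hZψm fun x _ => hφ0 x
  have hcomplφ : Sᶜ.indicator φ = ({x : Ω | ψ x = 0} : Set Ω).indicator φ := by
    funext x
    by_cases hxS : x ∈ S
    · have hx : 0 < φ x ∧ 0 < ψ x := by rw [hSdef] at hxS; exact hxS
      rw [Set.indicator_of_notMem (by simp [hxS]) φ,
        Set.indicator_of_notMem (by simp [ne_of_gt hx.2]) φ]
    · have hx : ¬(0 < φ x ∧ 0 < ψ x) := by rw [hSdef] at hxS; exact hxS
      rw [Set.indicator_of_mem (Set.mem_compl hxS) φ]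
      by_cases hψx : ψ x = 0
      · rw [Set.indicator_of_mem (show x ∈ {x : Ω | ψ x = 0} from hψx) φ]
      · have hφx : φ x = 0 := by
          rcases not_and_or.mp hx with h | h
          · exact le_antisymm (not_lt.mp h) (hφ0 x)
          · exact absurd (lt_of_le_of_ne (hψ0 x) (Ne.symm hψx)) h
        rw [Set.indicator_of_notMem (show x ∉ {x : Ω | ψ x = 0} from hψx) φ, hφx]
  have hcomplψ : Sᶜ.indicator ψ = ({x : Ω | φ x = 0} : Set Ω).indicator ψ := by
    funext x
    by_cases hxS : x ∈ S
    · have hx : 0 < φ x ∧ 0 < ψ x := by rw [hSdef] at hxS; exact hxS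
      rw [Set.indicator_of_notMem (by simp [hxS]) ψ,
        Set.indicator_of_notMem (by simp [ne_of_gt hx.1]) ψ]
    · have hx : ¬(0 < φ x ∧ 0 < ψ x) := by rw [hSdef] at hxS; exact hxS
      rw [Set.indicator_of_mem (Set.mem_compl hxS) ψ]
      by_cases hφx : φ x = 0
      · rw [Set.indicator_of_mem (show x ∈ {x : Ω | φ x = 0} from hφx) ψ]
      · have hψx : ψ x = 0 := by
          rcases not_and_or.mp hx with h | h
          · exact absurd (lt_of_le_of_ne (hφ0 x) (Ne.symm hφx)) h
          · exact le_antisymm (not_lt.mp h) (hψ0 x)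
        rw [Set.indicator_of_notMem (show x ∉ {x : Ω | φ x = 0} from hφx) ψ, hψx]
  have hintφc : ∫ x in Sᶜ, φ x ∂μ = B := by
    rw [← integral_indicator hS.compl, hcomplφ, integral_indicator hZψm, hBdef]
  have hintψc : ∫ x in Sᶜ, ψ x ∂μ = A := by
    rw [← integral_indicator hS.compl, hcomplψ, integral_indicator hZφm, hAdef]
  have hSφ : ∫ x in S, φ x ∂μ = 1 - B := by
    have h := integral_add_compl hS hφi (f := φ)
    rw [hintφc, hφ1] at h
    linarith
  have hSψ : ∫ x in S, ψ x ∂μ = 1 - A := by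
    have h := integral_add_compl hS hψi (f := ψ)
    rw [hintψc, hψ1] at h
    linarith
  have hHint : ∫ x, H x ∂μ = c * (A - B) := by
    rw [hHind, integral_indicator hS]
    rw [show (fun x => c * (φ x - ψ x)) = fun x => c * ((fun y => φ y - ψ y) x) from rfl]
    rw [integral_const_mul c fun y => φ y - ψ y]
    rw [integral_sub hφi.integrableOn hψi.integrableOn, hSφ, hSψ]
    ring
  set D := ∫⁻ x, ENNReal.ofReal (G x - H x) ∂μ with hDdef
  have keyG : eIntegral μ G = (D : EReal) + ((c * (A - B) : ℝ) : EReal) := by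
    rw [eIntegral_eq_of_le μ G H hGm hHi hHG, hHint, hDdef]
  have hdiv : classicalFDiv μ f f0 finf φ ψ
      = (D : EReal) + ((c * (A - B) : ℝ) : EReal) + f0 * (A : EReal) + finf * (B : EReal) := by
    simp only [classicalFDiv]
    rw [← hGdef, ← hAdef, ← hBdef, keyG]
  -- bound for f0
  have hk0 : c * ((1:ℝ)/2 - 1) ≤ f (1/2) := hc _ (by norm_num)
  set k := f (1/2) + c/2 with hkdef
  have hk : 0 ≤ k := by rw [hkdef]; linarith
  have hf0k : ∀ t : ℝ, 0 < t → t < 1/2 → c * (t - 1) + k ≤ f t := by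
    intro t ht ht2
    have hsl : (f t - f 1)/(t - 1) ≤ (f (1/2) - f 1)/((1:ℝ)/2 - 1) :=
      hf.secant_mono (Set.mem_Ioi.mpr one_pos) (Set.mem_Ioi.mpr ht)
        (Set.mem_Ioi.mpr (by norm_num)) (by linarith) (by norm_num) (by linarith)
    rw [hf1, sub_zero, sub_zero] at hsl
    have h4 : f (1/2) / ((1:ℝ)/2 - 1) = -2 * f (1/2) := by
      rw [div_eq_iff (by norm_num : ((1:ℝ)/2 - 1) ≠ 0)]; ring
    rw [h4] at hsl
    have h5 : -2 * f (1/2) * (t - 1) ≤ f t := by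
      have h6 := mul_le_mul_of_nonpos_right hsl (by linarith : t - 1 ≤ 0)
      rw [div_mul_cancel₀ _ (by intro hz; rw [sub_eq_zero] at hz; linarith : t - 1 ≠ 0)] at h6
      linarith
    rw [hkdef]
    nlinarith [mul_nonneg (by linarith : (0:ℝ) ≤ 1/2 - t) (by linarith : (0:ℝ) ≤ 2 * f (1/2) + c)]
  have hf0ge : ((-c + k : ℝ) : EReal) ≤ f0 := by
    have hlim : Tendsto (fun t : ℝ => ((c * (t - 1) + k : ℝ) : EReal)) (nhdsWithin 0 (Set.Ioi 0))
        (nhds ((-c + k : ℝ) : EReal)) := by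
      rw [EReal.tendsto_coe]
      have h7 : Tendsto (fun t : ℝ => c * (t - 1) + k) (nhds 0) (nhds (c * ((0:ℝ) - 1) + k)) :=
        ((continuous_const.mul (continuous_id.sub continuous_const)).add continuous_const).tendsto 0
      have h0 : c * ((0:ℝ) - 1) + k = -c + k := by ring
      rw [h0] at h7
      exact h7.mono_left nhdsWithin_le_nhds
    refine le_of_tendsto_of_tendsto hlim hf0 ?_
    filter_upwards [Ioo_mem_nhdsGT_of_mem
      (show (0:ℝ) ∈ Set.Ico (0:ℝ) (1/2) by constructor <;> norm_num)] with t ht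
    exact EReal.coe_le_coe_iff.mpr (hf0k t ht.1 ht.2)
  -- bounds for finf
  have hfinfge : ∀ d : ℝ, (∀ t : ℝ, 2 ≤ t → d * (t - 1) ≤ f t) → (d : EReal) ≤ finf := by
    intro d hd
    have hlim : Tendsto (fun t : ℝ => ((d - d / t : ℝ) : EReal)) atTop (nhds ((d:ℝ) : EReal)) := by
      rw [EReal.tendsto_coe]
      have h1 : Tendsto (fun t : ℝ => d / t) atTop (nhds 0) :=
        tendsto_const_nhds.div_atTop tendsto_id
      have h2 := (tendsto_const_nhds (x := d) (f := atTop (α := ℝ))).sub h1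
      simpa using h2
    refine le_of_tendsto_of_tendsto hlim hfinf ?_
    filter_upwards [eventually_ge_atTop (2:ℝ)] with t ht
    refine EReal.coe_le_coe_iff.mpr ?_
    have ht0 : (0:ℝ) < t := by linarith
    have h1 : d * (t-1) / t ≤ f t / t := by gcongr; exact hd t ht
    have h2 : d - d / t = d * (t - 1) / t := by field_simp
    rw [h2]; exact h1
  have hfinfc : (c : EReal) ≤ finf := hfinfge c (fun t ht => hc t (by linarith))
  have hf2c : c ≤ f 2 := by have := hc 2 (by norm_num); linarith
  have hfinff2 : ((f 2 : ℝ) : EReal) ≤ finf := by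
    refine hfinfge (f 2) ?_
    intro t ht
    rcases eq_or_lt_of_le ht with rfl | h2t
    · norm_num
    · have hsl := hf.secant_mono (Set.mem_Ioi.mpr one_pos) (Set.mem_Ioi.mpr (by norm_num : (0:ℝ) < 2))
        (Set.mem_Ioi.mpr (by linarith : (0:ℝ) < t)) (by norm_num) (by intro hz; rw [hz] at h2t; linarith)
        (by linarith)
      rw [hf1, sub_zero, sub_zero] at hsl
      have h8 : f 2 ≤ f t / (t - 1) := by
        have : ((2:ℝ) - 1) = 1 := by norm_num
        rw [this, div_one] at hsl
        exact hsl
      calc f 2 * (t-1) ≤ (f t/(t-1)) * (t-1) :=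
            mul_le_mul_of_nonneg_right h8 (by linarith)
        _ = f t := div_mul_cancel₀ _ (sub_ne_zero.mpr (by linarith))
  have hf0c : ((-c : ℝ) : EReal) ≤ f0 :=
    le_trans (EReal.coe_le_coe_iff.mpr (by linarith : -c ≤ -c + k)) hf0ge
  -- nonnegativity
  have hT1 : ((-c * A : ℝ) : EReal) ≤ f0 * (A : EReal) := aux_mul_coe_le hf0c hA0
  have hT2 : ((c * B : ℝ) : EReal) ≤ finf * (B : EReal) := aux_mul_coe_le hfinfc hB0
  have hnonneg : 0 ≤ classicalFDiv μ f f0 finf φ ψ := by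
    rw [hdiv]
    have hstep : ((c*(A-B) : ℝ) : EReal) + ((-c*A : ℝ) : EReal) + ((c*B : ℝ) : EReal)
        ≤ (D : EReal) + ((c*(A-B) : ℝ) : EReal) + f0 * (A:EReal) + finf * (B:EReal) := by
      refine add_le_add (add_le_add ?_ hT1) hT2
      calc ((c*(A-B) : ℝ) : EReal) = 0 + ((c*(A-B) : ℝ) : EReal) := (zero_add _).symm
        _ ≤ (D : EReal) + ((c*(A-B) : ℝ) : EReal) :=
            add_le_add_left (EReal.coe_ennreal_nonneg D) _
    refine le_trans ?_ hstep
    have hz : ((c*(A-B) : ℝ) : EReal) + ((-c*A : ℝ) : EReal) + ((c*B : ℝ) : EReal)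
        = ((0:ℝ) : EReal) := by
      norm_cast
      ring
    rw [hz]
    norm_num
  refine ⟨hnonneg, ?_⟩
  intro hsc heq
  have hkpos : 0 < k := by
    have := hcs hsc (1/2) (by norm_num) (by norm_num)
    rw [hkdef]; linarith
  have hf2lt : c < f 2 := by
    have := hcs hsc 2 (by norm_num) (by norm_num); linarith
  rw [hdiv] at heq
  have hT1bot : f0 * (A : EReal) ≠ ⊥ := by
    intro hbb
    rw [hbb] at hT1
    exact (not_le.mpr (EReal.bot_lt_coe _)) hT1
  have hT2bot : finf * (B : EReal) ≠ ⊥ := by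
    intro hbb
    rw [hbb] at hT2
    exact (not_le.mpr (EReal.bot_lt_coe _)) hT2
  have hDtop : D ≠ ⊤ := by
    intro hDt
    rw [hDt, EReal.coe_ennreal_top, EReal.top_add_coe,
      EReal.top_add_of_ne_bot hT1bot, EReal.top_add_of_ne_bot hT2bot] at heq
    exact (by simp : (⊤:EReal) ≠ 0) heq
  have hDcoe : ((D : ℝ≥0∞) : EReal) = ((D.toReal : ℝ) : EReal) := aux_coe_ennreal_toReal hDtop
  have hT1top : f0 * (A:EReal) ≠ ⊤ := by
    intro hTt
    rw [hDcoe, hTt, ← EReal.coe_add,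
      EReal.add_top_of_ne_bot (EReal.coe_ne_bot _), EReal.top_add_of_ne_bot hT2bot] at heq
    exact (by simp : (⊤:EReal) ≠ 0) heq
  have hT2top : finf * (B:EReal) ≠ ⊤ := by
    intro hTt
    rw [hDcoe, hTt, ← EReal.coe_add] at heq
    have hne : ((D.toReal + c * (A - B) : ℝ) : EReal) + f0 * (A:EReal) ≠ ⊥ := by
      rw [ne_eq, EReal.add_eq_bot_iff]
      push_neg
      exact ⟨EReal.coe_ne_bot _, hT1bot⟩
    rw [EReal.add_top_of_ne_bot hne] at heq
    exact (by simp : (⊤:EReal) ≠ 0) heq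
  obtain ⟨t1, ht1⟩ : ∃ t1 : ℝ, f0 * (A:EReal) = (t1 : EReal) :=
    ⟨_, (EReal.coe_toReal hT1top hT1bot).symm⟩
  obtain ⟨t2, ht2⟩ : ∃ t2 : ℝ, finf * (B:EReal) = (t2 : EReal) :=
    ⟨_, (EReal.coe_toReal hT2top hT2bot).symm⟩
  rw [hDcoe, ht1, ht2] at heq
  have heqr : D.toReal + c * (A - B) + t1 + t2 = 0 := by exact_mod_cast heq
  rw [ht1] at hT1
  rw [ht2] at hT2
  have ht1r : -c * A ≤ t1 := EReal.coe_le_coe_iff.mp hT1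
  have ht2r : c * B ≤ t2 := EReal.coe_le_coe_iff.mp hT2
  have hDnn : 0 ≤ D.toReal := ENNReal.toReal_nonneg
  have hco : c * (A - B) = c * A - c * B := by ring
  have hmc : -c * A = -(c * A) := by ring
  have hDz : D.toReal = 0 := by linarith
  have ht1z : t1 = -c * A := by linarith
  have ht2z : t2 = c * B := by linarith
  have hAz : A = 0 := by
    by_contra hA
    have hApos : 0 < A := lt_of_le_of_ne hA0 (Ne.symm hA)
    have hf0top : f0 ≠ ⊤ := by
      intro hft
      rw [hft, EReal.top_mul_coe_of_pos hApos] at ht1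
      exact (EReal.coe_ne_top t1) ht1.symm
    obtain ⟨y, hy⟩ : ∃ y : ℝ, f0 = (y:EReal) := ⟨f0.toReal, (EReal.coe_toReal hf0top hf0bot).symm⟩
    have hyge : -c + k ≤ y := EReal.coe_le_coe_iff.mp (hy ▸ hf0ge)
    rw [hy, ← EReal.coe_mul] at ht1
    have hya : y * A = t1 := by exact_mod_cast ht1
    have hprod : (y + c) * A = y * A + c * A := by ring
    have hneg : -c * A = -(c * A) := by ring
    linarith [mul_pos (show (0:ℝ) < y + c by linarith) hApos]
  have hBz : B = 0 := by
    by_contra hB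
    have hBpos : 0 < B := lt_of_le_of_ne hB0 (Ne.symm hB)
    have hfinftop : finf ≠ ⊤ := by
      intro hft
      rw [hft, EReal.top_mul_coe_of_pos hBpos] at ht2
      exact (EReal.coe_ne_top t2) ht2.symm
    obtain ⟨y, hy⟩ : ∃ y : ℝ, finf = (y:EReal) :=
      ⟨finf.toReal, (EReal.coe_toReal hfinftop hfinfbot).symm⟩
    have hyge : f 2 ≤ y := EReal.coe_le_coe_iff.mp (hy ▸ hfinff2)
    rw [hy, ← EReal.coe_mul] at ht2
    have hyb : y * B = t2 := by exact_mod_cast ht2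
    have hprod : (y - c) * B = y * B - c * B := by ring
    linarith [mul_pos (show (0:ℝ) < y - c by linarith) hBpos]
  have hD0' : D = 0 := by
    rcases (ENNReal.toReal_eq_zero_iff D).mp hDz with h | h
    · exact h
    · exact absurd h hDtop
  have haeGH : ∀ᵐ x ∂μ, G x = H x := by
    have hmeas : Measurable fun x => ENNReal.ofReal (G x - H x) := (hGm.sub hHm).ennreal_ofReal
    have h9 : ∫⁻ x, ENNReal.ofReal (G x - H x) ∂μ = 0 := by rw [← hDdef]; exact hD0'
    have h10 := (lintegral_eq_zero_iff' hmeas.aemeasurable).mp h9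
    filter_upwards [h10] with x hx
    simp only [Pi.zero_apply] at hx
    have h11 : G x - H x ≤ 0 := ENNReal.ofReal_eq_zero.mp hx
    linarith [hHG x]
  have haeψ : ∀ᵐ x ∂μ, φ x = 0 → ψ x = 0 := by
    have h0 : ∫ x in {x : Ω | φ x = 0}, ψ x ∂μ = 0 := by rw [← hAdef]; exact hAz
    have h12 := (integral_eq_zero_iff_of_nonneg (fun x => hψ0 x) hψi.integrableOn).mp h0
    have h13 := (ae_restrict_iff' hZφm).mp h12
    filter_upwards [h13] with x hx hφx
    exact hx hφx
  have haeφ : ∀ᵐ x ∂μ, ψ x = 0 → φ x = 0 := by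
    have h0 : ∫ x in {x : Ω | ψ x = 0}, φ x ∂μ = 0 := by rw [← hBdef]; exact hBz
    have h12 := (integral_eq_zero_iff_of_nonneg (fun x => hφ0 x) hφi.integrableOn).mp h0
    have h13 := (ae_restrict_iff' hZψm).mp h12
    filter_upwards [h13] with x hx hψx
    exact hx hψx
  filter_upwards [haeGH, haeψ, haeφ] with x h3 h1 h2
  by_cases hx : 0 < φ x ∧ 0 < ψ x
  · have hGx : G x = ψ x * f (φ x / ψ x) := by simp only [hGdef]; rw [if_pos hx]
    have hHx : H x = c * (φ x - ψ x) := by simp only [hHdef]; rw [if_pos hx]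
    by_contra hne
    have htne : φ x / ψ x ≠ 1 := by
      intro h1'
      rw [div_eq_one_iff_eq (ne_of_gt hx.2)] at h1'
      exact hne h1'
    have hstrict := hcs hsc _ (div_pos hx.1 hx.2) htne
    have hmul := mul_lt_mul_of_pos_left hstrict hx.2
    have hrw : ψ x * (c * (φ x / ψ x - 1)) = c * (φ x - ψ x) := by
      have hψne : ψ x ≠ 0 := ne_of_gt hx.2
      field_simp
    rw [hrw] at hmul
    rw [hGx, hHx] at h3
    linarith
  · rcases not_and_or.mp hx with h | h
    · have hφx : φ x = 0 := le_antisymm (not_lt.mp h) (hφ0 x)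
      rw [hφx, h1 hφx]
    · have hψx : ψ x = 0 := le_antisymm (not_lt.mp h) (hψ0 x)
      rw [hψx, h2 hψx]
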